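/- Let G be a finite graph with positive symmetric edge weights ℓ in which every vertex has at least one neighbor. Then the total tree-curvature action satisfies Σ_{{i,j}∈E(G)} K_{ij} = Σ_{i∈V(G)} (2 − c_i²/d_i). -/

import Mathlib

open Finset

/-- `cv G ℓ i = Σ_{k ∼ i} 1/ℓ(i,k)`. -/
noncomputable def cv {V : Type*} (G : SimpleGraph V) [G.LocallyFinite]
    (ℓ : V → V → ℝ) (i : V) : ℝ :=
  ∑ k ∈ G.neighborFinset i, (ℓ i k)⁻¹

/-- `dv G ℓ i = Σ_{k ∼ i} 1/ℓ(i,k)²`. -/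
noncomputable def dv {V : Type*} (G : SimpleGraph V) [G.LocallyFinite]
    (ℓ : V → V → ℝ) (i : V) : ℝ :=
  ∑ k ∈ G.neighborFinset i, ((ℓ i k)⁻¹) ^ 2


/-- The tree curvature of the edge `{i,j}`:
`K_{ij} = (2/ℓ(i,j)²)·(1/d_i + 1/d_j) − (1/ℓ(i,j))·(c_i/d_i + c_j/d_j)`. -/
noncomputable def treeCurv {V : Type*} (G : SimpleGraph V) [G.LocallyFinite]
    (ℓ : V → V → ℝ) (i j : V) : ℝ :=
  (2 / (ℓ i j) ^ 2) * (1 / dv G ℓ i + 1 / dv G ℓ j)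
    - (1 / ℓ i j) * (cv G ℓ i / dv G ℓ i + cv G ℓ j / dv G ℓ j)

theorem sum_tree_curvature_eq {V : Type*} [Fintype V] [DecidableEq V]
    (G : SimpleGraph V) [DecidableRel G.Adj] [G.LocallyFinite]
    (ℓ : V → V → ℝ) (hsymm : ∀ u v, ℓ u v = ℓ v u)
    (hpos : ∀ u v, G.Adj u v → 0 < ℓ u v)
    (hdeg : ∀ v, 0 < G.degree v)
    (F : Sym2 V → ℝ)
    (hF : ∀ i j, G.Adj i j → F s(i, j) = treeCurv G ℓ i j) :
    ∑ e ∈ G.edgeFinset, F e = ∑ i, (2 - (cv G ℓ i) ^ 2 / dv G ℓ i) := by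
  have hdv : ∀ v, 0 < dv G ℓ v := by
    intro v
    have hne : (G.neighborFinset v).Nonempty := by
      rw [← Finset.card_pos, G.card_neighborFinset_eq_degree]; exact hdeg v
    exact Finset.sum_pos (fun k hk => by
      have := hpos v k ((G.mem_neighborFinset v k).mp hk)
      positivity) hne
  set g : G.Dart → ℝ := fun d =>
    (2 / (ℓ d.fst d.snd) ^ 2) * (1 / dv G ℓ d.fst)
      - (1 / ℓ d.fst d.snd) * (cv G ℓ d.fst / dv G ℓ d.fst) with hg
  have key1 : ∑ d : G.Dart, g d = ∑ e ∈ G.edgeFinset, F e := by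
    rw [← Finset.sum_fiberwise_of_maps_to (g := SimpleGraph.Dart.edge) (t := G.edgeFinset)
      (fun d _ => by rw [SimpleGraph.mem_edgeFinset]; exact d.edge_mem)]
    refine Finset.sum_congr rfl fun e he => ?_
    rw [SimpleGraph.mem_edgeFinset] at he
    induction' e with i j
    have hadj : G.Adj i j := he
    set d : G.Dart := ⟨(i, j), hadj⟩ with hd
    have hfib : (Finset.univ.filter fun d' : G.Dart => d'.edge = s(i,j)) = {d, d.symm} := by
      have := d.edge_fiber
      exact this
    rw [hfib, Finset.sum_pair d.symm_ne.symm, hF i j hadj, hg]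
    show (2 / ℓ i j ^ 2) * (1 / dv G ℓ i) - (1 / ℓ i j) * (cv G ℓ i / dv G ℓ i)
      + ((2 / ℓ j i ^ 2) * (1 / dv G ℓ j) - (1 / ℓ j i) * (cv G ℓ j / dv G ℓ j))
      = treeCurv G ℓ i j
    rw [hsymm j i, treeCurv]; ring
  have key2 : ∑ d : G.Dart, g d = ∑ i, (2 - (cv G ℓ i) ^ 2 / dv G ℓ i) := by
    rw [← Finset.sum_fiberwise_of_maps_to (g := fun d : G.Dart => d.fst) (t := Finset.univ)
      (fun d _ => Finset.mem_univ _)]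
    refine Finset.sum_congr rfl fun v _ => ?_
    have hstep : ∑ d ∈ Finset.univ.filter (fun d : G.Dart => d.fst = v), g d
        = ∑ k ∈ G.neighborFinset v,
          ((2 / (ℓ v k) ^ 2) * (1 / dv G ℓ v) - (1 / ℓ v k) * (cv G ℓ v / dv G ℓ v)) := by
      refine Finset.sum_bij' (fun d _ => d.snd)
        (fun k hk => (⟨(v, k), by simpa using hk⟩ : G.Dart)) ?_ ?_ ?_ ?_ ?_
      · intro d hd
        simp only [Finset.mem_filter, Finset.mem_univ, true_and] at hd
        rw [SimpleGraph.mem_neighborFinset]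
        exact hd ▸ d.adj
      · intro k hk; simp
      · intro d hd
        simp only [Finset.mem_filter, Finset.mem_univ, true_and] at hd
        exact SimpleGraph.Dart.ext _ _ (Prod.ext hd.symm rfl)
      · intro k hk; rfl
      · intro d hd
        simp only [Finset.mem_filter, Finset.mem_univ, true_and] at hd
        simp [hg, hd]
    rw [hstep]
    have hd := (hdv v).ne'
    rw [Finset.sum_sub_distrib, ← Finset.sum_mul, ← Finset.sum_mul]
    have e1 : ∑ k ∈ G.neighborFinset v, 2 / ℓ v k ^ 2 = 2 * dv G ℓ v := by
      rw [dv, Finset.mul_sum]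
      exact Finset.sum_congr rfl fun k _ => by rw [inv_pow]; ring
    have e2 : ∑ k ∈ G.neighborFinset v, 1 / ℓ v k = cv G ℓ v := by
      rw [cv]; exact Finset.sum_congr rfl fun k _ => one_div _
    rw [e1, e2]
    field_simp
  rw [← key1, key2]
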